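/- A reflexive binary relation ≥ on a set A admits a complete and transitive extension if and only if it is Suzumura-consistent, i.e., whenever a₁ ≥ a₂ ≥ … ≥ a_K, it is not the case that a_K > a₁ (where b > a means b ≥ a and not a ≥ b). An extension ≥' of ≥ is a relation such that b ≥ a implies b ≥' a and b > a implies b >' a. -/

import Mathlib

variable {A : Type*}

/-- `r'` extends `r`: weak and strict comparisons are preserved. -/
def IsExt (r r' : A → A → Prop) : Prop :=
  ∀ a b : A, (r a b → r' a b) ∧ (r a b ∧ ¬ r b a → r' a b ∧ ¬ r' b a)

/-- Suzumura-consistency: along any finite `r`-chain `a 0 ≥ a 1 ≥ … ≥ a K`, it is not the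
case that `a K > a 0` (where `b > a` means `r b a ∧ ¬ r a b`). -/
def SuzConsistent (r : A → A → Prop) : Prop :=
  ∀ (K : ℕ) (a : ℕ → A), (∀ k, k < K → r (a k) (a (k + 1))) →
    ¬ (r (a K) (a 0) ∧ ¬ r (a 0) (a K))

/-- Extract a finite chain from a reflexive-transitive-closure witness. -/
lemma rtg_chain (r : A → A → Prop) {b c : A} (h : Relation.ReflTransGen r b c) :
    ∃ (K : ℕ) (f : ℕ → A), f 0 = b ∧ f K = c ∧ ∀ k, k < K → r (f k) (f (k + 1)) := by
  induction h with
  | refl => exact ⟨0, fun _ => b, rfl, rfl, fun k hk => absurd hk (Nat.not_lt_zero k)⟩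
  | @tail c d hbc hcd ih =>
    obtain ⟨K, f, h0, hK, hstep⟩ := ih
    refine ⟨K + 1, fun n => if n = K + 1 then d else f n, by simp [h0], by simp, ?_⟩
    intro k hk
    show r (if k = K + 1 then d else f k) (if k + 1 = K + 1 then d else f (k + 1))
    rcases Nat.lt_or_ge k K with hlt | hge
    · rw [if_neg (by omega), if_neg (by omega)]
      exact hstep k hlt
    · have hkK : k = K := by omega
      subst hkK
      rw [if_neg (by omega), if_pos rfl, hK]
      exact hcd

/-- Suzumura's extension theorem: a reflexive relation admits a complete and transitive
extension iff it is Suzumura-consistent. -/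
theorem suzumura_extension (r : A → A → Prop) (hrefl : Reflexive r) :
    (∃ r' : A → A → Prop, (∀ a b, r' a b ∨ r' b a) ∧ Transitive r' ∧ IsExt r r') ↔
      SuzConsistent r := by
  constructor
  · rintro ⟨r', htot, htrans, hext⟩ K a hchain ⟨hKa, hna⟩
    have h' : ∀ k, k ≤ K → r' (a 0) (a k) := by
      intro k hk
      induction k with
      | zero => rcases htot (a 0) (a 0) with h | h <;> exact h
      | succ n ih =>
        exact htrans (ih (Nat.le_of_succ_le hk))
          ((hext (a n) (a (n + 1))).1 (hchain n (Nat.lt_of_succ_le hk)))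
    exact ((hext (a K) (a 0)).2 ⟨hKa, hna⟩).2 (h' K le_rfl)
  · intro hcons
    set T : A → A → Prop := Relation.ReflTransGen r with hT
    -- key: strict r-pairs are not connected backwards by T
    have key : ∀ a b : A, r a b → ¬ r b a → ¬ T b a := by
      intro a b hab hnba hTba
      obtain ⟨K, f, h0, hK, hstep⟩ := rtg_chain r hTba
      exact hcons K f hstep ⟨by rw [h0, hK]; exact hab, by rw [h0, hK]; exact hnba⟩
    -- quotient by mutual T-comparability
    let st : Setoid A :=
      ⟨fun a b => T a b ∧ T b a,
        ⟨fun a => ⟨Relation.ReflTransGen.refl, Relation.ReflTransGen.refl⟩,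
         fun h => ⟨h.2, h.1⟩,
         fun h1 h2 => ⟨h1.1.trans h2.1, h2.2.trans h1.2⟩⟩⟩
    let Q := Quotient st
    let qrel : Q → Q → Prop :=
      Quotient.lift₂ (fun a b => T a b)
        (by
          intro a b a' b' ha hb
          exact propext ⟨fun h => ha.2.trans (h.trans hb.1),
                          fun h => ha.1.trans (h.trans hb.2)⟩)
    haveI hpo : IsPartialOrder Q qrel := by
      refine { refl := ?_, trans := ?_, antisymm := ?_ }
      · intro q; induction q using Quotient.ind
        exact Relation.ReflTransGen.refl
      · intro q1 q2 q3
        induction q1 using Quotient.ind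
        induction q2 using Quotient.ind
        induction q3 using Quotient.ind
        exact fun h1 h2 => Relation.ReflTransGen.trans h1 h2
      · intro q1 q2
        induction q1 using Quotient.ind
        induction q2 using Quotient.ind
        intro h1 h2
        exact Quotient.sound ⟨h1, h2⟩
    obtain ⟨s, hls, hsub⟩ := extend_partialOrder qrel
    refine ⟨fun a b => s ⟦a⟧ ⟦b⟧, ?_, ?_, ?_⟩
    · intro a b; exact hls.toTotal.total _ _
    · intro a b c hab hbc; exact hls.toIsPartialOrder.toIsPreorder.toIsTrans.trans _ _ _ hab hbc
    · intro a b
      constructor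
      · intro hab
        exact hsub _ _ (Relation.ReflTransGen.single hab)
      · rintro ⟨hab, hnba⟩
        have hTab : T a b := Relation.ReflTransGen.single hab
        have hsab : s ⟦a⟧ ⟦b⟧ := hsub _ _ hTab
        refine ⟨hsab, fun hsba => ?_⟩
        have heq : (⟦b⟧ : Q) = ⟦a⟧ :=
          hls.toIsPartialOrder.toAntisymm.antisymm _ _ hsba hsab
        have : st.r b a := Quotient.exact heq
        exact key a b hab hnba this.1
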